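/- Suppose gcd(p, 2q) = 1. Then for distinct residues c, c' modulo 2q, the infinite sequences v_c and v_{c'} are distinct; equivalently, if σ(c + i·p) = σ(c' + i·p) for all i ∈ ℕ then c ≡ c' (mod 2q). -/

import Mathlib

theorem vertex_sequences_distinct
    (p q : ℕ) (hp : 0 < p) (hq : 0 < q) (hgcd : Nat.gcd p (2 * q) = 1) (σ : ℤ → ℤ)
    (hσ : ∀ m : ℤ, σ m = if m % (2 * (q : ℤ)) < (q : ℤ) then 1 else -1)
    (v : ℤ → ℕ → ℤ) (hv : ∀ (c : ℤ) (i : ℕ), v c i = σ (c + (i : ℤ) * (p : ℤ))) :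
    ∀ c c' : ℤ, (∀ i : ℕ, v c i = v c' i) → c ≡ c' [ZMOD (2 * q)] := by
  intro c c' h
  set m : ℕ := 2 * q with hm_def
  have hm : 0 < m := by positivity
  haveI : NeZero m := ⟨hm.ne'⟩
  set n : ℤ := 2 * (q : ℤ) with hn_def
  have hn : 0 < n := by positivity
  have hnm : (m : ℤ) = n := by push_cast [hm_def, hn_def]; ring
  -- σ only depends on residue mod n
  have hσmod : ∀ a b : ℤ, a % n = b % n → σ a = σ b := by
    intro a b hab
    rw [hσ a, hσ b, hab]
  -- p is a unit mod m
  have hcop : Nat.Coprime p m := hgcd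
  have hunit : IsUnit (p : ZMod m) := (ZMod.isUnit_iff_coprime p m).mpr hcop
  obtain ⟨pu, hpu⟩ := hunit
  set pinv : ZMod m := ((pu⁻¹ : (ZMod m)ˣ) : ZMod m) with hpinv_def
  have hp1 : (p : ZMod m) * pinv = 1 := by
    rw [← hpu, hpinv_def]
    exact_mod_cast pu.mul_inv
  set d : ℤ := c' - c with hd_def
  -- key: σ t = σ (t + d) for all t
  have key : ∀ t : ℤ, σ t = σ (t + d) := by
    intro t
    set x : ZMod m := ((t - c : ℤ) : ZMod m) * pinv with hx_def
    set i : ℕ := x.val with hi_def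
    have hxi : (i : ZMod m) = x := by
      simp [hi_def, ZMod.natCast_val, ZMod.cast_id]
    have hcast1 : ((c + (i : ℤ) * (p : ℤ) : ℤ) : ZMod m) = ((t : ℤ) : ZMod m) := by
      push_cast
      rw [hxi, hx_def]
      calc (c : ZMod m) + ((t - c : ℤ) : ZMod m) * pinv * (p : ZMod m)
          = (c : ZMod m) + ((t - c : ℤ) : ZMod m) * ((p : ZMod m) * pinv) := by ring
        _ = (c : ZMod m) + ((t - c : ℤ) : ZMod m) := by rw [hp1, mul_one]
        _ = ((t : ℤ) : ZMod m) := by push_cast; ring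
    have hcast2 : ((c' + (i : ℤ) * (p : ℤ) : ℤ) : ZMod m) = ((t + d : ℤ) : ZMod m) := by
      push_cast
      rw [hxi, hx_def]
      calc (c' : ZMod m) + ((t - c : ℤ) : ZMod m) * pinv * (p : ZMod m)
          = (c' : ZMod m) + ((t - c : ℤ) : ZMod m) * ((p : ZMod m) * pinv) := by ring
        _ = (c' : ZMod m) + ((t - c : ℤ) : ZMod m) := by rw [hp1, mul_one]
        _ = ((t : ℤ) : ZMod m) + ((d : ℤ) : ZMod m) := by rw [hd_def]; push_cast; ring
    have hmod1 : (c + (i : ℤ) * (p : ℤ)) % n = t % n := by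
      have := (ZMod.intCast_eq_intCast_iff _ _ _).mp hcast1
      rwa [Int.ModEq, hnm] at this
    have hmod2 : (c' + (i : ℤ) * (p : ℤ)) % n = (t + d) % n := by
      have := (ZMod.intCast_eq_intCast_iff _ _ _).mp hcast2
      rwa [Int.ModEq, hnm] at this
    have hvi := h i
    rw [hv, hv] at hvi
    calc σ t = σ (c + (i : ℤ) * (p : ℤ)) := (hσmod _ _ hmod1).symm
      _ = σ (c' + (i : ℤ) * (p : ℤ)) := hvi
      _ = σ (t + d) := hσmod _ _ hmod2
  -- now deduce d ≡ 0 mod n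
  set e : ℤ := d % n with he_def
  have he0 : 0 ≤ e := Int.emod_nonneg _ hn.ne'
  have he1 : e < n := Int.emod_lt_of_pos _ hn
  have hee : e % n = e := Int.emod_eq_of_lt he0 he1
  have hde : d % n = e % n := by rw [hee]
  -- from key 0 : e < q
  have h0 : σ 0 = σ d := by simpa using key 0
  have hσ0 : σ 0 = 1 := by
    rw [hσ]
    rw [Int.zero_emod]
    rw [if_pos (by exact_mod_cast hq)]
  have heq : e < (q : ℤ) := by
    by_contra hc
    push_neg at hc
    have : σ d = -1 := by
      rw [hσmod d e hde, hσ, hee, if_neg (not_lt.mpr hc)]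
    rw [hσ0, this] at h0
    norm_num at h0
  -- from key (q - e) : e = 0
  have he_zero : e = 0 := by
    by_contra hc
    have hepos : 0 < e := lt_of_le_of_ne he0 (Ne.symm hc)
    have hk := key ((q : ℤ) - e)
    have hl : ((q : ℤ) - e) % n = (q : ℤ) - e := by
      have hqn : (q : ℤ) < n := by
        rw [hn_def]
        have : (0 : ℤ) < q := by exact_mod_cast hq
        linarith
      apply Int.emod_eq_of_lt (by linarith) (by linarith)
    have hr : ((q : ℤ) - e + d) % n = (q : ℤ) := by
      have : ((q : ℤ) - e + d) % n = ((q : ℤ) - e + e) % n := by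
        conv_lhs => rw [Int.add_emod, hde, ← Int.add_emod]
      rw [this]
      have : (q : ℤ) - e + e = (q : ℤ) := by ring
      rw [this]
      apply Int.emod_eq_of_lt (by positivity)
      rw [hn_def]
      have : (0 : ℤ) < q := by exact_mod_cast hq
      linarith
    have hleft : σ ((q : ℤ) - e) = 1 := by
      rw [hσ, hl, if_pos (by linarith)]
    have hright : σ ((q : ℤ) - e + d) = -1 := by
      rw [hσ, hr, if_neg (lt_irrefl _)]
    rw [hleft, hright] at hk
    norm_num at hk
  -- conclude
  have hdvd : (m : ℤ) ∣ c' - c := by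
    rw [hnm]
    exact Int.dvd_of_emod_eq_zero (he_def ▸ he_zero)
  exact (Int.modEq_iff_dvd.mpr hdvd)
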